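/- Let Γ be a Conway 99-graph, let x be a vertex, and let v ∈ Γ₂(x). Then v has exactly two neighbors a, b in Γ₁(x); each vertex of Γ₁(x) has a unique neighbor inside Γ₁(x) (so the induced graph on Γ₁(x) is a perfect matching), and we let a′, b′ denote the matching-mates of a and b respectively. Then among the 12 neighbors of v lying in Γ₂(x): for each c ∈ {a, a′, b, b′}, exactly one such neighbor of v is adjacent to c, and for each c ∈ Γ₁(x) \ {a, a′, b, b′}, exactly two such neighbors of v are adjacent to c. -/

import Mathlib

open SimpleGraph

private lemma card_one_eq {V : Type*} {s : Set V} [Fintype s] (h1 : Fintype.card s = 1)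
    {p q : V} (hp : p ∈ s) (hq : q ∈ s) : p = q := by
  have := Fintype.card_le_one_iff.mp h1.le ⟨p, hp⟩ ⟨q, hq⟩
  exact Subtype.ext_iff.mp this

private lemma ncard_eq_fintype_card {V : Type*} (s : Set V) [Fintype s] :
    s.ncard = Fintype.card s := by
  rw [Set.ncard_eq_toFinset_card', Set.toFinset_card]

/-- Let `Γ` be a Conway 99-graph, `x` a vertex and `v ∈ Γ₂(x)`. Then `v` has
exactly two neighbors `a, b` in `Γ₁(x)`; every vertex of `Γ₁(x)` has a unique
neighbor inside `Γ₁(x)` (the induced graph on `Γ₁(x)` is a perfect matching);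
and, with `a′, b′` the matching-mates of `a` and `b`, among the 12 neighbors of
`v` in `Γ₂(x)`: for each `c ∈ {a, a′, b, b′}` exactly one is adjacent to `c`, and
for each other `c ∈ Γ₁(x)` exactly two are adjacent to `c`. -/
theorem stmt_15 {V : Type*} [Fintype V] (G : SimpleGraph V) [DecidableRel G.Adj]
    (h : G.IsSRGWith 99 14 1 2)
    (x v : V) (hv : v ≠ x ∧ ¬G.Adj x v) :
    ∃ a b : V, a ≠ b ∧ {c : V | G.Adj x c ∧ G.Adj v c} = {a, b} ∧
      (∀ c : V, G.Adj x c → ∃! d : V, G.Adj x d ∧ G.Adj c d) ∧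
      (∀ a' b' : V, G.Adj x a' → G.Adj a a' → G.Adj x b' → G.Adj b b' →
        ((∀ c ∈ ({a, a', b, b'} : Set V),
            Set.ncard {w : V | (w ≠ x ∧ ¬G.Adj x w) ∧ G.Adj v w ∧ G.Adj w c} = 1) ∧
          (∀ c : V, G.Adj x c → c ∉ ({a, a', b, b'} : Set V) →
            Set.ncard {w : V | (w ≠ x ∧ ¬G.Adj x w) ∧ G.Adj v w ∧ G.Adj w c} = 2))) := by
  obtain ⟨hvx, hxv⟩ := hv
  have hμ := h.of_not_adj
  have hl := h.of_adj
  -- the set of common neighbors of x and v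
  have hS0 : {c : V | G.Adj x c ∧ G.Adj v c} = G.commonNeighbors x v := by
    ext c; simp [mem_commonNeighbors, Set.mem_setOf_eq]
  have hcard0 : (G.commonNeighbors x v).ncard = 2 := by
    rw [ncard_eq_fintype_card]; exact hμ (Ne.symm hvx) hxv
  obtain ⟨a, b, hab, habeq⟩ := Set.ncard_eq_two.mp hcard0
  have ha : a ∈ G.commonNeighbors x v := by rw [habeq]; exact Set.mem_insert _ _
  have hb : b ∈ G.commonNeighbors x v := by
    rw [habeq]; exact Set.mem_insert_of_mem _ rfl
  rw [mem_commonNeighbors] at ha hb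
  obtain ⟨hxa, hva⟩ := ha
  obtain ⟨hxb, hvb⟩ := hb
  -- any neighbor of v adjacent to x is a or b
  have hmem : ∀ w : V, G.Adj v w → G.Adj x w → w = a ∨ w = b := by
    intro w h1 h2
    have : w ∈ G.commonNeighbors x v := mem_commonNeighbors _ |>.mpr ⟨h2, h1⟩
    rw [habeq] at this
    simpa using this
  -- a and b are not adjacent
  have hnab : ¬ G.Adj a b := by
    intro had
    have h1 := hl a b had
    have hxm : x ∈ G.commonNeighbors a b := mem_commonNeighbors _ |>.mpr ⟨hxa.symm, hxb.symm⟩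
    have hvm : v ∈ G.commonNeighbors a b := mem_commonNeighbors _ |>.mpr ⟨hva.symm, hvb.symm⟩
    exact hvx (card_one_eq h1 hvm hxm)
  refine ⟨a, b, hab, by rw [hS0, habeq], ?_, ?_⟩
  · -- perfect matching on Γ₁(x)
    intro c hxc
    have h1 : Fintype.card (G.commonNeighbors x c) = 1 := hl x c hxc
    obtain ⟨d, hd⟩ := Set.ncard_eq_one.mp
      (show (G.commonNeighbors x c).ncard = 1 by rw [ncard_eq_fintype_card]; exact h1)
    refine ⟨d, ?_, ?_⟩
    · have hdm : d ∈ G.commonNeighbors x c := by rw [hd]; rfl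
      exact (mem_commonNeighbors _).mp hdm
    · intro e he
      have : e ∈ G.commonNeighbors x c := (mem_commonNeighbors _).mpr he
      rw [hd] at this
      exact this
  · intro a' b' hxa' haa' hxb' hbb'
    -- uniqueness of matching mates
    have hmate : ∀ p p' : V, G.Adj x p → G.Adj x p' → G.Adj p p' →
        ∀ e : V, G.Adj x e → G.Adj p e → e = p' := by
      intro p p' hxp hxp' hpp' e hxe hpe
      exact card_one_eq (hl x p hxp)
        ((mem_commonNeighbors _).mpr ⟨hxe, hpe⟩)
        ((mem_commonNeighbors _).mpr ⟨hxp', hpp'⟩)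
    have hnba' : ¬ G.Adj a' b := by
      intro hadj
      exact hab (card_one_eq (hl x a' hxa')
        ((mem_commonNeighbors _).mpr ⟨hxa, haa'.symm⟩)
        ((mem_commonNeighbors _).mpr ⟨hxb, hadj⟩))
    have hnab' : ¬ G.Adj b' a := by
      intro hadj
      exact hab (card_one_eq (hl x b' hxb')
        ((mem_commonNeighbors _).mpr ⟨hxb, hbb'.symm⟩)
        ((mem_commonNeighbors _).mpr ⟨hxa, hadj⟩)).symm
    have hnva' : ¬ G.Adj v a' := by
      intro hva'
      rcases hmem a' hva' hxa' with he | he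
      · exact G.irrefl (he ▸ haa')
      · exact hnab (he ▸ haa')
    have hnvb' : ¬ G.Adj v b' := by
      intro hvb'
      rcases hmem b' hvb' hxb' with he | he
      · exact hnab (by rw [he] at hbb'; exact hbb'.symm)
      · exact G.irrefl (he ▸ hbb')
    have hvne : ∀ c : V, G.Adj x c → v ≠ c := fun c hxc he => hxv (he ▸ hxc)
    have hwnex : ∀ w : V, G.Adj v w → w ≠ x := fun w h1 he => hxv ((he ▸ h1).symm)
    constructor
    · -- count 1 cases
      intro c hc
      simp only [Set.mem_insert_iff, Set.mem_singleton_iff] at hc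
      rcases hc with rfl | rfl | rfl | rfl
      · -- c = a
        have heq : {w : V | (w ≠ x ∧ ¬G.Adj x w) ∧ G.Adj v w ∧ G.Adj w c}
            = G.commonNeighbors v c := by
          ext w
          simp only [Set.mem_setOf_eq, mem_commonNeighbors]
          constructor
          · rintro ⟨_, h1, h2⟩; exact ⟨h1, h2.symm⟩
          · rintro ⟨h1, h2⟩
            refine ⟨⟨hwnex w h1, ?_⟩, h1, h2.symm⟩
            intro hxw
            rcases hmem w h1 hxw with rfl | rfl
            · exact G.irrefl h2
            · exact hnab h2
        rw [heq, ncard_eq_fintype_card]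
        exact hl v c hva
      · -- c = a'
        have heq : {w : V | (w ≠ x ∧ ¬G.Adj x w) ∧ G.Adj v w ∧ G.Adj w c}
            = G.commonNeighbors v c \ {a} := by
          ext w
          simp only [Set.mem_setOf_eq, Set.mem_diff, mem_commonNeighbors,
            Set.mem_singleton_iff]
          constructor
          · rintro ⟨⟨_, hnxw⟩, h1, h2⟩
            exact ⟨⟨h1, h2.symm⟩, fun he => hnxw (he ▸ hxa)⟩
          · rintro ⟨⟨h1, h2⟩, hwa⟩
            refine ⟨⟨hwnex w h1, ?_⟩, h1, h2.symm⟩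
            intro hxw
            rcases hmem w h1 hxw with rfl | rfl
            · exact hwa rfl
            · exact hnba' h2
        rw [heq, Set.ncard_diff_singleton_of_mem
          ((mem_commonNeighbors _).mpr ⟨hva, haa'.symm⟩),
          ncard_eq_fintype_card, hμ (hvne c hxa') hnva']
      · -- c = b
        have heq : {w : V | (w ≠ x ∧ ¬G.Adj x w) ∧ G.Adj v w ∧ G.Adj w c}
            = G.commonNeighbors v c := by
          ext w
          simp only [Set.mem_setOf_eq, mem_commonNeighbors]
          constructor
          · rintro ⟨_, h1, h2⟩; exact ⟨h1, h2.symm⟩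
          · rintro ⟨h1, h2⟩
            refine ⟨⟨hwnex w h1, ?_⟩, h1, h2.symm⟩
            intro hxw
            rcases hmem w h1 hxw with rfl | rfl
            · exact hnab h2.symm
            · exact G.irrefl h2
        rw [heq, ncard_eq_fintype_card]
        exact hl v c hvb
      · -- c = b'
        have heq : {w : V | (w ≠ x ∧ ¬G.Adj x w) ∧ G.Adj v w ∧ G.Adj w c}
            = G.commonNeighbors v c \ {b} := by
          ext w
          simp only [Set.mem_setOf_eq, Set.mem_diff, mem_commonNeighbors,
            Set.mem_singleton_iff]
          constructor
          · rintro ⟨⟨_, hnxw⟩, h1, h2⟩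
            exact ⟨⟨h1, h2.symm⟩, fun he => hnxw (he ▸ hxb)⟩
          · rintro ⟨⟨h1, h2⟩, hwb⟩
            refine ⟨⟨hwnex w h1, ?_⟩, h1, h2.symm⟩
            intro hxw
            rcases hmem w h1 hxw with rfl | rfl
            · exact hnab' h2
            · exact hwb rfl
        rw [heq, Set.ncard_diff_singleton_of_mem
          ((mem_commonNeighbors _).mpr ⟨hvb, hbb'.symm⟩),
          ncard_eq_fintype_card, hμ (hvne c hxb') hnvb']
    · -- count 2 cases
      intro c hxc hcnot
      simp only [Set.mem_insert_iff, Set.mem_singleton_iff, not_or] at hcnot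
      obtain ⟨hca, hca', hcb, hcb'⟩ := hcnot
      have hnvc : ¬ G.Adj v c := by
        intro hvc
        rcases hmem c hvc hxc with rfl | rfl
        · exact hca rfl
        · exact hcb rfl
      have heq : {w : V | (w ≠ x ∧ ¬G.Adj x w) ∧ G.Adj v w ∧ G.Adj w c}
          = G.commonNeighbors v c := by
        ext w
        simp only [Set.mem_setOf_eq, mem_commonNeighbors]
        constructor
        · rintro ⟨_, h1, h2⟩; exact ⟨h1, h2.symm⟩
        · rintro ⟨h1, h2⟩
          refine ⟨⟨hwnex w h1, ?_⟩, h1, h2.symm⟩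
          intro hxw
          rcases hmem w h1 hxw with rfl | rfl
          · exact hca' (hmate w a' hxa hxa' haa' c hxc h2.symm)
          · exact hcb' (hmate w b' hxb hxb' hbb' c hxc h2.symm)
      rw [heq, ncard_eq_fintype_card]
      exact hμ (hvne c hxc) hnvc
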